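/- With K ⊂ k^{n×n} the multiplication-matrix algebra of F_{q^n} w.r.t. a normal basis and A the Frobenius permutation matrix, the full matrix ring decomposes as k^{n×n} = K ⊕ KA ⊕ KA² ⊕ … ⊕ KA^{n-1} (a direct sum of k-subspaces). -/

import Mathlib

open Matrix

theorem matrix_ring_internal_direct_sum_cyclic_algebra
    {k K : Type*} [Field k] [Fintype k] [Field K] [Fintype K] [Algebra k K]
    {n : ℕ} [NeZero n] (γ : K) (b : Module.Basis (Fin n) k K)
    (hb : ∀ i : Fin n, b i = γ ^ (Fintype.card k ^ (i : ℕ)))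
    (A : Matrix (Fin n) (Fin n) k)
    (hA : ∀ i j : Fin n, A i j = if i = j + 1 then 1 else 0) :
    DirectSum.IsInternal (fun i : Fin n =>
      Submodule.map (LinearMap.mulRight k (A ^ (i : ℕ)))
        (LinearMap.range (Algebra.leftMulMatrix b).toLinearMap)) := by
  classical
  set q := Fintype.card k with hq
  haveI : FiniteDimensional k K := b.finiteDimensional_of_finite
  have hq1 : 1 < q := Fintype.one_lt_card
  have hcardK : Fintype.card K = q ^ n := by
    rw [Module.card_fintype b, Fintype.card_fin]
  -- characteristic facts
  obtain ⟨p, hpk⟩ := CharP.exists k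
  haveI := hpk
  haveI : CharP K p := charP_of_injective_algebraMap (algebraMap k K).injective p
  obtain ⟨m, hpprime, hcard⟩ := FiniteField.card k p
  have hfinrank : Module.finrank k K = n := by
    rw [Module.finrank_eq_card_basis b, Fintype.card_fin]
  haveI : Fact p.Prime := ⟨hpprime⟩
  -- the Frobenius as a k-linear endomorphism of K
  have hadd : ∀ x y : K, (x + y) ^ q = x ^ q + y ^ q := by
    intro x y
    rw [hq, hcard]
    exact add_pow_char_pow x y p ↑m
  have hsmul : ∀ (c : k) (x : K), (c • x) ^ q = c • x ^ q := by
    intro c x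
    rw [Algebra.smul_def, Algebra.smul_def, mul_pow, ← map_pow, FiniteField.pow_card]
  let gl : K →ₗ[k] K :=
    { toFun := fun x => x ^ q
      map_add' := hadd
      map_smul' := hsmul }
  have hglapp : ∀ x : K, gl x = x ^ q := fun _ => rfl
  have hglpow : ∀ (i : ℕ) (x : K), (gl ^ i) x = x ^ q ^ i := by
    intro i
    induction i with
    | zero => intro x; simp
    | succ i ih =>
      intro x
      rw [pow_succ, Module.End.mul_apply, hglapp, ih, ← pow_mul, ← pow_succ']
  -- periodicity of Frobenius powers
  have hper : ∀ (x : K) (m' : ℕ), x ^ q ^ m' = x ^ q ^ (m' % n) := by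
    intro x m'
    conv_lhs => rw [← Nat.mod_add_div m' n]
    rw [pow_add, pow_mul, pow_mul, ← hcardK, FiniteField.pow_card_pow]
  -- Frobenius permutes the normal basis cyclically
  have hgb : ∀ j : Fin n, gl (b j) = b (j + 1) := by
    intro j
    have h1 : ((j + 1 : Fin n) : ℕ) = ((j : ℕ) + 1) % n := by
      rw [Fin.val_add, Fin.val_one']
      conv_rhs => rw [Nat.add_mod, Nat.mod_eq_of_lt j.isLt]
    rw [hglapp, hb j, hb (j + 1), h1, ← pow_mul, ← pow_succ, hper γ ((j : ℕ) + 1)]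
  -- the matrix of the Frobenius is A
  set e := LinearMap.toMatrixAlgEquiv b with he
  have hAe : e gl = A := by
    ext i j
    rw [LinearMap.toMatrixAlgEquiv_apply, hgb j, Module.Basis.repr_self, Finsupp.single_apply, hA]
    exact if_congr eq_comm rfl rfl
  have hApow : ∀ i : ℕ, A ^ i = e (gl ^ i) := by
    intro i
    rw [map_pow, hAe]
  -- distinctness of the power maps
  have hdist : Function.Injective
      (fun i : Fin n => (powMonoidHom (q ^ (i : ℕ)) : K →* K)) := by
    intro i j hij
    rcases Nat.lt_or_ge 1 n with hn | hn
    · obtain ⟨ζ, hζ⟩ := IsCyclic.exists_generator (α := Kˣ)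
      have horder : orderOf ζ = q ^ n - 1 := by
        rw [orderOf_eq_card_of_forall_mem_zpowers hζ, Nat.card_eq_fintype_card, Fintype.card_units, hcardK]
      have hzeta : ζ ^ q ^ (i : ℕ) = ζ ^ q ^ (j : ℕ) := by
        apply Units.ext
        have := DFunLike.congr_fun hij (ζ : K)
        simpa [powMonoidHom_apply, Units.val_pow_eq_pow_val] using this
      have hmod := pow_eq_pow_iff_modEq.mp hzeta
      rw [horder] at hmod
      have hbound : ∀ l : Fin n, q ^ (l : ℕ) < q ^ n - 1 := by
        intro l
        have h1 : q ^ (l : ℕ) ≤ q ^ (n - 1) :=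
          Nat.pow_le_pow_right (le_of_lt hq1) (by omega)
        have h2 : q ^ (n - 1) * 2 ≤ q ^ (n - 1) * q := Nat.mul_le_mul_left _ hq1
        have h3 : q ^ (n - 1) * q = q ^ n := by
          rw [← pow_succ]
          congr 1
          omega
        have h4 : q ^ 1 ≤ q ^ (n - 1) := Nat.pow_le_pow_right (le_of_lt hq1) (by omega)
        have h5 : q ^ 1 = q := pow_one q
        omega
      have heq : q ^ (i : ℕ) = q ^ (j : ℕ) :=
        Nat.ModEq.eq_of_lt_of_lt hmod (hbound i) (hbound j)
      exact Fin.ext (Nat.pow_right_injective hq1 heq)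
    · have hn1 : n = 1 := le_antisymm hn (Nat.one_le_iff_ne_zero.mpr (NeZero.ne n))
      subst hn1
      exact Subsingleton.elim i j
  -- Dedekind independence of characters
  have hli : LinearIndependent K
      (fun i : Fin n => ((powMonoidHom (q ^ (i : ℕ)) : K →* K) : K → K)) :=
    (linearIndependent_monoidHom K K).comp _ hdist
  -- the big linear map Φ
  set lm := (Algebra.lmul k K).toLinearMap with hlm
  let Φ : (Fin n → K) →ₗ[k] (K →ₗ[k] K) :=
    ∑ i : Fin n, LinearMap.mulRight k (gl ^ (i : ℕ)) ∘ₗ lm ∘ₗ LinearMap.proj i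
  have hΦapp : ∀ c : Fin n → K,
      Φ c = ∑ i : Fin n, Algebra.lmul k K (c i) * gl ^ (i : ℕ) := by
    intro c
    simp [Φ, LinearMap.sum_apply, LinearMap.mulRight_apply, hlm]
  have hΦinj : Function.Injective Φ := by
    rw [← LinearMap.ker_eq_bot, eq_bot_iff]
    rintro c hc
    simp only [LinearMap.mem_ker] at hc
    have hfun : ∀ x : K, ∑ i : Fin n, c i * x ^ q ^ (i : ℕ) = 0 := by
      intro x
      have h0 := congrArg (fun f : K →ₗ[k] K => f x) (hΦapp c ▸ hc)
      simpa [LinearMap.sum_apply, Module.End.mul_apply, hglpow,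
        Algebra.coe_lmul_eq_mul, LinearMap.mul_apply'] using h0
    have hz := Fintype.linearIndependent_iff.mp hli c ?_
    · rw [Submodule.mem_bot]
      funext i
      exact hz i
    · funext x
      simpa [Finset.sum_apply, powMonoidHom_apply] using hfun x
  have hΦsurj : Function.Surjective Φ := by
    have hranks : Module.finrank k (Fin n → K) = Module.finrank k (K →ₗ[k] K) := by
      rw [Module.finrank_pi_fintype, Module.finrank_linearMap]
      simp [hfinrank, Finset.sum_const, Fintype.card_fin, smul_eq_mul]
    rw [← LinearMap.range_eq_top]
    exact (LinearMap.ker_eq_bot_iff_range_eq_top_of_finrank_eq_finrank hranks).mp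
      (LinearMap.ker_eq_bot.mpr hΦinj)
  -- the submodules in End
  set T : Fin n → Submodule k (K →ₗ[k] K) := fun i =>
    Submodule.map (LinearMap.mulRight k (gl ^ (i : ℕ))) (LinearMap.range lm) with hT
  have hmemT : ∀ (i : Fin n) (x : K), Algebra.lmul k K x * gl ^ (i : ℕ) ∈ T i := by
    intro i x
    exact ⟨Algebra.lmul k K x, ⟨x, rfl⟩, rfl⟩
  have hTsup : ⨆ i, T i = ⊤ := by
    rw [eq_top_iff]
    rintro f -
    obtain ⟨c, rfl⟩ := hΦsurj f
    rw [hΦapp]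
    exact Submodule.sum_mem _ fun i _ => Submodule.mem_iSup_of_mem i (hmemT i (c i))
  have hTindep : iSupIndep T := by
    apply iSupIndep_of_dfinsupp_lsum_injective
    letI : AddGroup (Π₀ (i : Fin n), ↥(T i)) :=
      @DFinsupp.instAddGroup _ _ (fun i => (T i).addCommGroup.toAddGroup)
    rw [injective_iff_map_eq_zero]
    intro v hv
    have hvc : ∀ i : Fin n, ∃ x : K,
        Algebra.lmul k K x * gl ^ (i : ℕ) = (v i : K →ₗ[k] K) := by
      intro i
      rcases (v i).2 with ⟨y, ⟨x, rfl⟩, hyv⟩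
      exact ⟨x, by simpa [LinearMap.mulRight_apply, hlm] using hyv⟩
    choose c hc using hvc
    have hvsum : (DFinsupp.lsum ℕ (M := fun i => ↥(T i)) fun i => (T i).subtype) v
        = ∑ i : Fin n, (v i : K →ₗ[k] K) := by
      have hv1 : v = ∑ i : Fin n, DFinsupp.single i (v i) := by
        ext j
        rw [DFinsupp.finset_sum_apply]
        simp [DFinsupp.single_apply]
      conv_lhs => rw [hv1]
      rw [map_sum]
      simp
    have h0 : Φ c = 0 := by
      rw [hΦapp]
      rw [Finset.sum_congr rfl fun i _ => hc i, ← hvsum]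
      exact hv
    have hc0 : c = 0 := hΦinj (by rw [h0]; exact (map_zero Φ).symm)
    have hv0 : ∀ i, (v i : K →ₗ[k] K) = 0 := by
      intro i
      rw [← hc i, congrFun hc0 i]
      simp
    ext i x
    simpa using DFunLike.congr_fun (hv0 i) x
  -- transfer along the algebra equivalence e
  have hE : ∀ (x : K) (i : ℕ),
      Algebra.leftMulMatrix b x * A ^ i = e (Algebra.lmul k K x * gl ^ i) := by
    intro x i
    rw [_root_.map_mul, ← hApow]
    congr 1
  have hPmap : (fun i : Fin n =>
      Submodule.map (LinearMap.mulRight k (A ^ (i : ℕ)))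
        (LinearMap.range (Algebra.leftMulMatrix b).toLinearMap))
      = fun i => Submodule.map e.toLinearEquiv.toLinearMap (T i) := by
    funext i
    ext M
    simp only [Submodule.mem_map, LinearMap.mem_range, LinearMap.mulRight_apply,
      AlgHom.toLinearMap_apply, hT]
    constructor
    · rintro ⟨B, ⟨x, rfl⟩, rfl⟩
      refine ⟨Algebra.lmul k K x * gl ^ (i : ℕ),
        ⟨Algebra.lmul k K x, ⟨x, rfl⟩, rfl⟩, ?_⟩
      exact (hE x (i : ℕ)).symm
    · rintro ⟨f, ⟨g, ⟨x, rfl⟩, rfl⟩, rfl⟩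
      exact ⟨Algebra.leftMulMatrix b x, ⟨x, rfl⟩, by rw [hE]; rfl⟩
  rw [hPmap, DirectSum.isInternal_submodule_iff_iSupIndep_and_iSup_eq_top]
  constructor
  · have h1 : (fun i => Submodule.map e.toLinearEquiv.toLinearMap (T i))
        = fun i => Submodule.orderIsoMapComap e.toLinearEquiv (T i) := rfl
    rw [h1]
    exact (iSupIndep_map_orderIso_iff _).mpr hTindep
  · rw [← Submodule.map_iSup, hTsup, Submodule.map_top]
    exact LinearEquiv.range e.toLinearEquiv
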